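/- For every integer d ≥ 1 and every δ ∈ (0,1/2), the integral ∫_{ℝ×ℝ^d} P(z) · ρ(‖z‖)² dz is finite, where ρ(r)² = min(r^{−(1−2δ)}, r^{−(d+2)−2δ}). In particular, whenever a function κ : ℝ×ℝ^d → ℝ satisfies |κ(z)| ≤ ρ(‖z‖)², the constant ∫_{ℝ×ℝ^d} P(z) κ(z) dz converges absolutely. -/

import Mathlib

open Real MeasureTheory

/-- Space-time `ℝ × ℝ^d`. -/
abbrev SpaceTime (d : ℕ) := ℝ × EuclideanSpace ℝ (Fin d)

/-- The parabolic norm `‖(t,x)‖ = (|x|⁴ + t²)^{1/4}`. -/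
noncomputable def pnorm {d : ℕ} (z : SpaceTime d) : ℝ :=
  (‖z.2‖ ^ 4 + z.1 ^ 2) ^ ((1 : ℝ) / 4)

/-- The heat kernel on `ℝ × ℝ^d`. -/
noncomputable def heatP (d : ℕ) (z : SpaceTime d) : ℝ :=
  if 0 < z.1 then (4 * π * z.1) ^ (-(d : ℝ) / 2) * Real.exp (-‖z.2‖ ^ 2 / (4 * z.1))
  else 0

/-- `ρ(r)² = min (r^{-(1-2δ)}) (r^{-(d+2)-2δ})`. -/
noncomputable def rhoSq (d : ℕ) (δ r : ℝ) : ℝ :=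
  min (r ^ (-(1 - 2 * δ))) (r ^ (-((d : ℝ) + 2) - 2 * δ))

/-! ### Auxiliary lemmas -/

lemma gauss_integrable (d : ℕ) {b : ℝ} (hb : 0 < b) :
    Integrable (fun v : EuclideanSpace ℝ (Fin d) => rexp (-b * ‖v‖ ^ 2)) := by
  have h := (GaussianFourier.integrable_cexp_neg_mul_sq_norm_add (V := EuclideanSpace ℝ (Fin d))
    (b := (b : ℂ)) (by simpa using hb) 0 0).norm
  refine h.congr (Filter.Eventually.of_forall fun v => ?_)
  simp [Complex.norm_exp]
  left
  norm_cast

lemma gauss_integral (d : ℕ) {b : ℝ} (hb : 0 < b) :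
    ∫ v : EuclideanSpace ℝ (Fin d), rexp (-b * ‖v‖ ^ 2) = (π / b) ^ ((d : ℝ) / 2) := by
  rw [GaussianFourier.integral_rexp_neg_mul_sq_norm hb]
  norm_num [finrank_euclideanSpace_fin]

lemma measurable_heatP (d : ℕ) : Measurable (heatP d) := by
  unfold heatP
  refine Measurable.ite (measurableSet_lt measurable_const measurable_fst) ?_ measurable_const
  exact ((measurable_const.mul measurable_fst).pow_const _).mul
    (((measurable_snd.norm.pow_const 2).neg.div (measurable_const.mul measurable_fst)).exp)

lemma heatP_nonneg (d : ℕ) (z : SpaceTime d) : 0 ≤ heatP d z := by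
  unfold heatP
  split
  · positivity
  · exact le_refl 0

lemma pnorm_nonneg {d : ℕ} (z : SpaceTime d) : 0 ≤ pnorm z :=
  Real.rpow_nonneg (by positivity) _

lemma measurable_pnorm {d : ℕ} : Measurable (pnorm (d := d)) :=
  ((measurable_snd.norm.pow_const 4).add (measurable_fst.pow_const 2)).pow_const _

lemma rhoSq_nonneg (d : ℕ) (δ : ℝ) {r : ℝ} (hr : 0 ≤ r) : 0 ≤ rhoSq d δ r :=
  le_min (Real.rpow_nonneg hr _) (Real.rpow_nonneg hr _)

/-- square root of time is at most the parabolic norm -/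
lemma sqrt_time_le_pnorm {d : ℕ} (z : SpaceTime d) (ht : 0 < z.1) :
    z.1 ^ ((1 : ℝ) / 2) ≤ pnorm z := by
  have h1 : z.1 ^ ((1 : ℝ) / 2) = (z.1 ^ 2) ^ ((1 : ℝ) / 4) := by
    rw [← Real.rpow_natCast z.1 2, ← Real.rpow_mul ht.le]
    norm_num
  rw [h1, pnorm]
  exact Real.rpow_le_rpow (by positivity) (by linarith [pow_nonneg (norm_nonneg z.2) 4]) (by norm_num)

/-- The dominating time profile. -/
noncomputable def gdom (d : ℕ) (δ t : ℝ) : ℝ :=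
  if 0 < t then
    min (t ^ ((1 : ℝ) / 2 * -(1 - 2 * δ))) (t ^ ((1 : ℝ) / 2 * (-((d : ℝ) + 2) - 2 * δ)))
  else 0

lemma measurable_gdom (d : ℕ) (δ : ℝ) : Measurable (gdom d δ) := by
  unfold gdom
  exact Measurable.ite measurableSet_Ioi
    ((measurable_id.pow_const _).min (measurable_id.pow_const _)) measurable_const

lemma gdom_nonneg (d : ℕ) (δ t : ℝ) : 0 ≤ gdom d δ t := by
  unfold gdom
  split
  · exact le_min (Real.rpow_nonneg (by linarith) _) (Real.rpow_nonneg (by linarith) _)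
  · exact le_refl 0

lemma rhoSq_le_gdom {d : ℕ} {δ : ℝ} (hδ : δ ∈ Set.Ioo (0 : ℝ) (1 / 2)) (z : SpaceTime d)
    (ht : 0 < z.1) : rhoSq d δ (pnorm z) ≤ gdom d δ z.1 := by
  obtain ⟨hδ0, hδ1⟩ := hδ
  have hs : 0 < z.1 ^ ((1 : ℝ) / 2) := Real.rpow_pos_of_pos ht _
  have hle := sqrt_time_le_pnorm z ht
  have hA : -(1 - 2 * δ) ≤ 0 := by linarith
  have hB : -((d : ℝ) + 2) - 2 * δ ≤ 0 := by
    have : (0 : ℝ) ≤ (d : ℝ) := Nat.cast_nonneg d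
    linarith
  rw [gdom, if_pos ht, Real.rpow_mul ht.le, Real.rpow_mul ht.le, rhoSq]
  exact min_le_min (Real.rpow_le_rpow_of_nonpos hs hle hA)
    (Real.rpow_le_rpow_of_nonpos hs hle hB)

lemma integrable_gdom (d : ℕ) (hd : 1 ≤ d) {δ : ℝ} (hδ : δ ∈ Set.Ioo (0 : ℝ) (1 / 2)) :
    Integrable (gdom d δ) := by
  obtain ⟨hδ0, hδ1⟩ := hδ
  have h1 : IntegrableOn (gdom d δ) (Set.Iic 0) := by
    refine (integrableOn_zero).congr_fun (fun t ht => ?_) measurableSet_Iic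
    simp only [Set.mem_Iic] at ht
    rw [gdom, if_neg (not_lt.2 ht)]
  have h2 : IntegrableOn (gdom d δ) (Set.Ioc 0 1) := by
    have hbase : IntegrableOn (fun t : ℝ => t ^ ((1 : ℝ) / 2 * -(1 - 2 * δ)))
        (Set.Ioc 0 1) := by
      have h := (intervalIntegral.integrableOn_Ioo_rpow_iff (zero_lt_one)).2
        (show (-1 : ℝ) < (1 : ℝ) / 2 * -(1 - 2 * δ) by linarith)
      rwa [IntegrableOn, Measure.restrict_congr_set Ioo_ae_eq_Ioc] at h
    refine Integrable.mono hbase ((measurable_gdom d δ).aestronglyMeasurable.restrict) ?_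
    refine (ae_restrict_iff' measurableSet_Ioc).2 (Filter.Eventually.of_forall fun t ht => ?_)
    rw [Real.norm_eq_abs, abs_of_nonneg (gdom_nonneg _ _ _), gdom, if_pos ht.1]
    exact (min_le_left _ _).trans (le_abs_self _)
  have h3 : IntegrableOn (gdom d δ) (Set.Ioi 1) := by
    have hbase : IntegrableOn (fun t : ℝ => t ^ ((1 : ℝ) / 2 * (-((d : ℝ) + 2) - 2 * δ)))
        (Set.Ioi 1) := by
      refine (integrableOn_Ioi_rpow_iff zero_lt_one).2 ?_
      have : (0 : ℝ) ≤ (d : ℝ) := Nat.cast_nonneg d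
      linarith
    refine Integrable.mono hbase ((measurable_gdom d δ).aestronglyMeasurable.restrict) ?_
    refine (ae_restrict_iff' measurableSet_Ioi).2 (Filter.Eventually.of_forall fun t ht => ?_)
    have ht0 : (0 : ℝ) < t := lt_trans zero_lt_one ht
    rw [Real.norm_eq_abs, abs_of_nonneg (gdom_nonneg _ _ _), gdom, if_pos ht0]
    exact (min_le_right _ _).trans (le_abs_self _)
  have huniv : Set.Iic (0 : ℝ) ∪ (Set.Ioc 0 1 ∪ Set.Ioi 1) = Set.univ := by
    ext t
    simp only [Set.mem_union, Set.mem_Iic, Set.mem_Ioc, Set.mem_Ioi, Set.mem_univ, iff_true]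
    rcases le_or_gt t 0 with h | h
    · exact Or.inl h
    · rcases le_or_gt t 1 with h' | h'
      · exact Or.inr (Or.inl ⟨h, h'⟩)
      · exact Or.inr (Or.inr h')
  rw [← integrableOn_univ, ← huniv]
  exact h1.union (h2.union h3)

lemma integrable_heatP_gdom (d : ℕ) (hd : 1 ≤ d) {δ : ℝ} (hδ : δ ∈ Set.Ioo (0 : ℝ) (1 / 2)) :
    Integrable (fun z : SpaceTime d => heatP d z * gdom d δ z.1) := by
  have hmeas : Measurable fun z : SpaceTime d => heatP d z * gdom d δ z.1 :=
    (measurable_heatP d).mul ((measurable_gdom d δ).comp measurable_fst)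
  rw [show (volume : Measure (SpaceTime d)) = (volume : Measure ℝ).prod volume from
    Measure.volume_eq_prod ℝ (EuclideanSpace ℝ (Fin d))]
  rw [integrable_prod_iff hmeas.aestronglyMeasurable]
  constructor
  · refine Filter.Eventually.of_forall fun t => ?_
    by_cases ht : 0 < t
    · have hb : (0 : ℝ) < 1 / (4 * t) := by positivity
      have hint := (gauss_integrable d hb).const_mul ((4 * π * t) ^ (-(d : ℝ) / 2) * gdom d δ t)
      refine hint.congr (Filter.Eventually.of_forall fun x => ?_)
      show _ = heatP d (t, x) * gdom d δ t
      simp only [heatP, if_pos ht]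
      rw [show -‖x‖ ^ 2 / (4 * t) = -(1 / (4 * t)) * ‖x‖ ^ 2 by field_simp]
      ring
    · have hz : (fun x : EuclideanSpace ℝ (Fin d) => heatP d (t, x) * gdom d δ t)
          = fun _ => 0 := by
        funext x
        simp only [heatP, if_neg ht, zero_mul]
      rw [hz]
      exact integrable_zero _ _ _
  · have key : ∀ t : ℝ,
        (∫ x : EuclideanSpace ℝ (Fin d), ‖heatP d (t, x) * gdom d δ t‖) = gdom d δ t := by
      intro t
      by_cases ht : 0 < t
      · have hb : (0 : ℝ) < 1 / (4 * t) := by positivity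
        have h4 : (0 : ℝ) < 4 * π * t := by positivity
        have hone : (4 * π * t) ^ (-(d : ℝ) / 2) * (4 * π * t) ^ ((d : ℝ) / 2) = 1 := by
          rw [← Real.rpow_add h4, neg_div, neg_add_cancel, Real.rpow_zero]
        calc ∫ x : EuclideanSpace ℝ (Fin d), ‖heatP d (t, x) * gdom d δ t‖
            = ∫ x : EuclideanSpace ℝ (Fin d),
                ((4 * π * t) ^ (-(d : ℝ) / 2) * gdom d δ t) * rexp (-(1 / (4 * t)) * ‖x‖ ^ 2) := by
              congr 1
              funext x
              rw [Real.norm_eq_abs,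
                abs_of_nonneg (mul_nonneg (heatP_nonneg d _) (gdom_nonneg _ _ _))]
              simp only [heatP, if_pos ht]
              rw [show -(1 / (4 * t)) * ‖x‖ ^ 2 = -‖x‖ ^ 2 / (4 * t) by field_simp]
              ring
          _ = ((4 * π * t) ^ (-(d : ℝ) / 2) * gdom d δ t) * ((π / (1 / (4 * t))) ^ ((d : ℝ) / 2)) := by
              rw [integral_const_mul, gauss_integral d hb]
          _ = gdom d δ t * ((4 * π * t) ^ (-(d : ℝ) / 2) * (4 * π * t) ^ ((d : ℝ) / 2)) := by
              rw [show π / (1 / (4 * t)) = 4 * π * t by field_simp]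
              ring
          _ = gdom d δ t := by rw [hone, mul_one]
      · rw [gdom, if_neg ht]
        simp [heatP, ht]
    simp_rw [key]
    exact integrable_gdom d hd ⟨hδ.1, hδ.2⟩

lemma master (d : ℕ) (hd : 1 ≤ d) {δ : ℝ} (hδ : δ ∈ Set.Ioo (0 : ℝ) (1 / 2))
    (κ : SpaceTime d → ℝ) (hκ : Measurable κ)
    (hb : ∀ z : SpaceTime d, z ≠ 0 → |κ z| ≤ rhoSq d δ (pnorm z)) :
    Integrable (fun z : SpaceTime d => heatP d z * κ z) := by
  refine (integrable_heatP_gdom d hd hδ).mono ((measurable_heatP d).mul hκ).aestronglyMeasurable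
    (Filter.Eventually.of_forall fun z => ?_)
  by_cases ht : 0 < z.1
  · have hz : z ≠ 0 := by
      intro h; rw [h] at ht; exact lt_irrefl 0 ht
    have h0 := heatP_nonneg d z
    rw [Real.norm_eq_abs, Real.norm_eq_abs, abs_mul, abs_of_nonneg h0,
      abs_of_nonneg (mul_nonneg h0 (gdom_nonneg d δ z.1))]
    exact mul_le_mul_of_nonneg_left ((hb z hz).trans (rhoSq_le_gdom hδ z ht)) h0
  · have : heatP d z = 0 := by unfold heatP; rw [if_neg ht]
    simp [this]

theorem stmt5 (d : ℕ) (hd : 1 ≤ d) (δ : ℝ) (hδ : δ ∈ Set.Ioo (0 : ℝ) (1 / 2)) :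
    Integrable (fun z : SpaceTime d => heatP d z * rhoSq d δ (pnorm z)) ∧
    ∀ κ : SpaceTime d → ℝ, Measurable κ →
      (∀ z : SpaceTime d, z ≠ 0 → |κ z| ≤ rhoSq d δ (pnorm z)) →
      Integrable (fun z : SpaceTime d => heatP d z * κ z) := by
  constructor
  · refine master d hd hδ _ ?_ fun z _ => ?_
    · exact (measurable_pnorm.pow_const _).min (measurable_pnorm.pow_const _)
    · rw [abs_of_nonneg (rhoSq_nonneg d δ (pnorm_nonneg z))]
  · exact fun κ hκ hb => master d hd hδ κ hκ hb
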